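/- Let z₁, z₂ > 0, s > 0, and define F_{z₁,z₂}(r) = arcosh(1 + (r² + (z₁ − z₂)²)/(2·z₁·z₂)). Let α = √(2/π)·(1 − e^{−1/2}) + ∫_1^∞ √(2/π)·e^{−z²/2} dz. Then ∫_0^∞ √(2/π)·e^{−z²/2} · F_{z₁,z₂}(s·z) dz ≥ α·F_{z₁,z₂}(s). -/

import Mathlib

open Real MeasureTheory

/-- The inverse hyperbolic cosine. -/
noncomputable def arcosh (x : ℝ) : ℝ := Real.log (x + Real.sqrt (x ^ 2 - 1))

lemma convexOn_sinh : ConvexOn ℝ (Set.Ici 0) Real.sinh := by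
  apply convexOn_of_deriv2_nonneg (convex_Ici 0) Real.continuous_sinh.continuousOn
    Real.differentiable_sinh.differentiableOn
  · rw [Real.deriv_sinh]; exact Real.differentiable_cosh.differentiableOn
  · intro x hx
    rw [interior_Ici, Set.mem_Ioi] at hx
    have : deriv^[2] Real.sinh x = Real.sinh x := by
      simp [Function.iterate_succ, Real.deriv_sinh, Real.deriv_cosh]
    rw [this]
    exact (Real.sinh_pos_iff.2 hx).le

lemma sinh_scale {u l : ℝ} (hu : 0 ≤ u) (hl0 : 0 ≤ l) (hl1 : l ≤ 1) :
    Real.sinh (l * u) ≤ l * Real.sinh u := by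
  have := convexOn_sinh.2 (Set.mem_Ici.2 hu) (Set.mem_Ici.2 le_rfl)
    hl0 (by linarith : (0:ℝ) ≤ 1 - l) (by ring)
  simpa using this

lemma arcosh_nonneg {x : ℝ} (hx : 1 ≤ x) : 0 ≤ _root_.arcosh x :=
  Real.log_nonneg (le_add_of_le_of_nonneg hx (Real.sqrt_nonneg _))

lemma arcosh_mono {a b : ℝ} (ha : 1 ≤ a) (hab : a ≤ b) : _root_.arcosh a ≤ _root_.arcosh b := by
  have h0 : (0:ℝ) < a + Real.sqrt (a ^ 2 - 1) := by positivity
  apply Real.log_le_log h0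
  gcongr

lemma cosh_arcosh {x : ℝ} (hx : 1 ≤ x) : Real.cosh (_root_.arcosh x) = x := by
  have hx0 : (0:ℝ) < x := by linarith
  have hs : Real.sqrt (x ^ 2 - 1) ^ 2 = x ^ 2 - 1 :=
    Real.sq_sqrt (by nlinarith)
  have hy : (0:ℝ) < x + Real.sqrt (x ^ 2 - 1) := by positivity
  rw [_root_.arcosh, Real.cosh_eq, Real.exp_log hy, Real.exp_neg, Real.exp_log hy]
  have hs' := Real.sqrt_nonneg (x ^ 2 - 1)
  field_simp
  nlinarith [hs]

lemma arcosh_cosh {t : ℝ} (ht : 0 ≤ t) : _root_.arcosh (Real.cosh t) = t := by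
  have h1 : Real.cosh t ^ 2 - 1 = Real.sinh t ^ 2 := by
    have := Real.cosh_sq t; linarith
  rw [_root_.arcosh, h1, Real.sqrt_sq (Real.sinh_nonneg_iff.2 ht), Real.cosh_add_sinh, Real.log_exp]

lemma cosh_eq_sinh_half (t : ℝ) : Real.cosh t = 2 * Real.sinh (t / 2) ^ 2 + 1 := by
  have h := Real.cosh_two_mul (t / 2)
  have h2 := Real.cosh_sq (t / 2)
  have : 2 * (t / 2) = t := by ring
  rw [this] at h
  linarith

lemma arcosh_sq_scale {x l : ℝ} (hx : 0 ≤ x) (hl0 : 0 ≤ l) (hl1 : l ≤ 1) :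
    l * _root_.arcosh (1 + x) ≤ _root_.arcosh (1 + l ^ 2 * x) := by
  set y := _root_.arcosh (1 + x) with hy
  have hy0 : 0 ≤ y := _root_.arcosh_nonneg (by linarith)
  have hcy : Real.cosh y = 1 + x := _root_.cosh_arcosh (by linarith)
  have hkey : Real.cosh (l * y) ≤ 1 + l ^ 2 * x := by
    have h1 : Real.sinh (l * (y / 2)) ≤ l * Real.sinh (y / 2) :=
      sinh_scale (by positivity) hl0 hl1
    have h0 : 0 ≤ Real.sinh (l * (y / 2)) :=
      Real.sinh_nonneg_iff.2 (by positivity)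
    have hsq : Real.sinh (l * (y / 2)) ^ 2 ≤ (l * Real.sinh (y / 2)) ^ 2 :=
      pow_le_pow_left₀ h0 h1 2
    have e1 : Real.cosh (l * y) = 2 * Real.sinh (l * (y / 2)) ^ 2 + 1 := by
      rw [cosh_eq_sinh_half (l * y)]; ring_nf
    have e2 : Real.cosh y = 2 * Real.sinh (y / 2) ^ 2 + 1 := cosh_eq_sinh_half y
    rw [e2] at hcy
    rw [e1]
    nlinarith [Real.sinh_nonneg_iff.2 (by positivity : (0:ℝ) ≤ y / 2)]
  calc l * y = _root_.arcosh (Real.cosh (l * y)) := (_root_.arcosh_cosh (by positivity)).symm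
    _ ≤ _root_.arcosh (1 + l ^ 2 * x) := arcosh_mono (Real.one_le_cosh _) hkey

lemma arcosh_le {u : ℝ} (hu : 0 ≤ u) : _root_.arcosh (1 + u) ≤ 2 * u + Real.sqrt (2 * u) := by
  have h1 : (1 + u) ^ 2 - 1 = u ^ 2 + 2 * u := by ring
  have h2 : Real.sqrt (u ^ 2 + 2 * u) ≤ u + Real.sqrt (2 * u) := by
    rw [show u ^ 2 + 2 * u = u ^ 2 + 2 * u from rfl]
    apply Real.sqrt_le_iff.mpr
    refine ⟨by positivity, ?_⟩
    have h2u : Real.sqrt (2 * u) ^ 2 = 2 * u := Real.sq_sqrt (by positivity)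
    nlinarith [Real.sqrt_nonneg (2 * u)]
  have h3 : _root_.arcosh (1 + u) ≤ Real.log (1 + (2 * u + Real.sqrt (2 * u))) := by
    rw [_root_.arcosh, h1]
    apply Real.log_le_log (by positivity)
    linarith
  calc _root_.arcosh (1 + u) ≤ Real.log (1 + (2 * u + Real.sqrt (2 * u))) := h3
    _ ≤ (1 + (2 * u + Real.sqrt (2 * u))) - 1 :=
        Real.log_le_sub_one_of_pos (by positivity)
    _ = 2 * u + Real.sqrt (2 * u) := by ring

/-- The hyperbolic distance, in the Poincaré half-space model, between two points
with heights `z₁, z₂` whose horizontal coordinates are at Euclidean distance `r`. -/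
noncomputable def F (z₁ z₂ r : ℝ) : ℝ :=
  _root_.arcosh (1 + (r ^ 2 + (z₁ - z₂) ^ 2) / (2 * z₁ * z₂))

lemma one_le_Farg {z₁ z₂ : ℝ} (hz₁ : 0 < z₁) (hz₂ : 0 < z₂) (r : ℝ) :
    1 ≤ 1 + (r ^ 2 + (z₁ - z₂) ^ 2) / (2 * z₁ * z₂) := by
  have : 0 ≤ (r ^ 2 + (z₁ - z₂) ^ 2) / (2 * z₁ * z₂) := by positivity
  linarith

lemma F_nonneg {z₁ z₂ : ℝ} (hz₁ : 0 < z₁) (hz₂ : 0 < z₂) (r : ℝ) : 0 ≤ F z₁ z₂ r :=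
  _root_.arcosh_nonneg (one_le_Farg hz₁ hz₂ r)

lemma F_mono {z₁ z₂ : ℝ} (hz₁ : 0 < z₁) (hz₂ : 0 < z₂) {r r' : ℝ} (h : r ^ 2 ≤ r' ^ 2) :
    F z₁ z₂ r ≤ F z₁ z₂ r' := by
  apply arcosh_mono (one_le_Farg hz₁ hz₂ r)
  have hd : (0:ℝ) < 2 * z₁ * z₂ := by positivity
  gcongr

lemma F_scale {z₁ z₂ : ℝ} (hz₁ : 0 < z₁) (hz₂ : 0 < z₂) {s z : ℝ} (hz0 : 0 ≤ z) (hz1 : z ≤ 1) :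
    z * F z₁ z₂ s ≤ F z₁ z₂ (s * z) := by
  set c := (z₁ - z₂) ^ 2 with hc
  set d := 2 * z₁ * z₂ with hd
  have hdpos : 0 < d := by positivity
  have hcn : 0 ≤ c := sq_nonneg _
  have h1 : z * F z₁ z₂ s ≤ _root_.arcosh (1 + z ^ 2 * ((s ^ 2 + c) / d)) := by
    have hx : 0 ≤ (s ^ 2 + c) / d := by positivity
    exact arcosh_sq_scale hx hz0 hz1
  have h2 : _root_.arcosh (1 + z ^ 2 * ((s ^ 2 + c) / d)) ≤
      _root_.arcosh (1 + ((s * z) ^ 2 + c) / d) := by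
    have hx : 0 ≤ (s ^ 2 + c) / d := by positivity
    apply arcosh_mono (by nlinarith [mul_nonneg (sq_nonneg z) hx])
    have e : z ^ 2 * ((s ^ 2 + c) / d) = (z ^ 2 * (s ^ 2 + c)) / d := by ring
    rw [e]
    have hz2 : z ^ 2 ≤ 1 := by nlinarith
    have hnum : z ^ 2 * (s ^ 2 + c) ≤ (s * z) ^ 2 + c := by nlinarith [mul_nonneg hcn (by linarith : (0:ℝ) ≤ 1 - z ^ 2)]
    gcongr
  exact h1.trans h2

lemma arcosh_quadratic_bound {p q z : ℝ} (hp : 0 ≤ p) (hq : 0 ≤ q) (hz : 0 ≤ z) :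
    _root_.arcosh (1 + (p * z ^ 2 + q)) ≤
      (2 * q + Real.sqrt (2 * q)) + Real.sqrt (2 * p) * z + 2 * p * z ^ 2 := by
  have hu : 0 ≤ p * z ^ 2 + q := by positivity
  have h1 := arcosh_le hu
  have h2 : Real.sqrt (2 * (p * z ^ 2 + q)) ≤ Real.sqrt (2 * p) * z + Real.sqrt (2 * q) := by
    apply Real.sqrt_le_iff.mpr
    refine ⟨by positivity, ?_⟩
    have e1 : Real.sqrt (2 * p) ^ 2 = 2 * p := Real.sq_sqrt (by positivity)
    have e2 : Real.sqrt (2 * q) ^ 2 = 2 * q := Real.sq_sqrt (by positivity)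
    nlinarith [Real.sqrt_nonneg (2 * p), Real.sqrt_nonneg (2 * q),
      mul_nonneg (mul_nonneg (Real.sqrt_nonneg (2*p)) (Real.sqrt_nonneg (2*q))) hz]
  calc _root_.arcosh (1 + (p * z ^ 2 + q)) ≤ 2 * (p * z ^ 2 + q) + Real.sqrt (2 * (p * z ^ 2 + q)) := h1
    _ ≤ 2 * (p * z ^ 2 + q) + (Real.sqrt (2 * p) * z + Real.sqrt (2 * q)) := by linarith
    _ = (2 * q + Real.sqrt (2 * q)) + Real.sqrt (2 * p) * z + 2 * p * z ^ 2 := by ring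

/-- Lemma 4.3: the expected projected hyperbolic distance is at least
`α · F_{z₁,z₂}(s)` where `α = √(2/π)(1 - e^{-1/2}) + ∫_1^∞ √(2/π) e^{-z²/2} dz`. -/
theorem expected_projected_distance_lower_bound
    (z₁ z₂ s : ℝ) (hz₁ : 0 < z₁) (hz₂ : 0 < z₂) (hs : 0 < s) :
    (Real.sqrt (2 / π) * (1 - Real.exp (-1 / 2)) +
        ∫ z in Set.Ioi (1 : ℝ), Real.sqrt (2 / π) * Real.exp (-z ^ 2 / 2)) *
      F z₁ z₂ s ≤
    ∫ z in Set.Ioi (0 : ℝ),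
      Real.sqrt (2 / π) * Real.exp (-z ^ 2 / 2) * F z₁ z₂ (s * z) := by
  have hπ : 0 < π := Real.pi_pos
  set Fs := F z₁ z₂ s with hFs
  set K := Real.sqrt (2 / π) with hK
  have hK0 : 0 ≤ K := Real.sqrt_nonneg _
  set c := (z₁ - z₂) ^ 2 with hc
  set d := 2 * z₁ * z₂ with hd
  have hdpos : 0 < d := by positivity
  have hexp_eq : ∀ z : ℝ, Real.exp (-z ^ 2 / 2) = Real.exp (-(2⁻¹ : ℝ) * z ^ 2) := by
    intro z; rw [show -z ^ 2 / 2 = -(2⁻¹ : ℝ) * z ^ 2 by ring]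
  -- integrable building blocks
  have hE : Integrable (fun z : ℝ => Real.exp (-(2⁻¹ : ℝ) * z ^ 2)) :=
    integrable_exp_neg_mul_sq (by norm_num)
  have hzE : Integrable (fun z : ℝ => z * Real.exp (-(2⁻¹ : ℝ) * z ^ 2)) :=
    integrable_mul_exp_neg_mul_sq (by norm_num)
  have hz2E : Integrable (fun z : ℝ => z ^ 2 * Real.exp (-(2⁻¹ : ℝ) * z ^ 2)) := by
    have h := integrable_rpow_mul_exp_neg_mul_sq (b := 2⁻¹) (by norm_num) (s := 2) (by norm_num)
    refine h.congr (Filter.Eventually.of_forall fun z => ?_)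
    simp only [Real.rpow_two]
  set A := 2 * (c / d) + Real.sqrt (2 * (c / d)) with hA
  set B := Real.sqrt (2 * (s ^ 2 / d)) with hB
  set C := 2 * (s ^ 2 / d) with hC
  have hbound : ∀ z : ℝ, 0 ≤ z → F z₁ z₂ (s * z) ≤ A + B * z + C * z ^ 2 := by
    intro z hz
    have e : F z₁ z₂ (s * z) = _root_.arcosh (1 + (s ^ 2 / d * z ^ 2 + c / d)) := by
      unfold F
      congr 1
      rw [← hc, ← hd]
      field_simp
    rw [e]
    have h := arcosh_quadratic_bound (p := s ^ 2 / d) (q := c / d)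
      (by positivity) (by positivity) hz
    calc _root_.arcosh (1 + (s ^ 2 / d * z ^ 2 + c / d)) ≤
        (2 * (c / d) + Real.sqrt (2 * (c / d))) + Real.sqrt (2 * (s ^ 2 / d)) * z
          + 2 * (s ^ 2 / d) * z ^ 2 := h
      _ = A + B * z + C * z ^ 2 := by rw [hA, hB, hC]
  have hmeas : Measurable fun z : ℝ => K * Real.exp (-z ^ 2 / 2) * F z₁ z₂ (s * z) := by
    unfold F _root_.arcosh
    refine (measurable_const.mul ?_).mul (Real.measurable_log.comp ?_)
    · exact ((measurable_id.pow_const 2).neg.div_const 2).exp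
    · have hb : Measurable fun z : ℝ =>
          1 + ((s * z) ^ 2 + (z₁ - z₂) ^ 2) / (2 * z₁ * z₂) := by
        exact measurable_const.add
          ((((measurable_const.mul measurable_id).pow_const 2).add measurable_const).div_const _)
      exact hb.add (Real.continuous_sqrt.measurable.comp ((hb.pow_const 2).sub measurable_const))
  have hD : Integrable (fun z : ℝ =>
      K * A * Real.exp (-(2⁻¹ : ℝ) * z ^ 2) + K * B * (z * Real.exp (-(2⁻¹ : ℝ) * z ^ 2))
        + K * C * (z ^ 2 * Real.exp (-(2⁻¹ : ℝ) * z ^ 2))) :=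
    ((hE.const_mul (K * A)).add (hzE.const_mul (K * B))).add (hz2E.const_mul (K * C))
  have hf : IntegrableOn (fun z : ℝ => K * Real.exp (-z ^ 2 / 2) * F z₁ z₂ (s * z))
      (Set.Ioi 0) := by
    apply Integrable.mono' hD.integrableOn hmeas.aestronglyMeasurable.restrict
    filter_upwards [ae_restrict_mem measurableSet_Ioi] with z hz
    have hz0 : (0 : ℝ) ≤ z := (Set.mem_Ioi.1 hz).le
    have hFnn : 0 ≤ F z₁ z₂ (s * z) := F_nonneg hz₁ hz₂ _
    rw [Real.norm_eq_abs, abs_of_nonneg (by positivity)]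
    calc K * Real.exp (-z ^ 2 / 2) * F z₁ z₂ (s * z)
        ≤ K * Real.exp (-z ^ 2 / 2) * (A + B * z + C * z ^ 2) :=
          mul_le_mul_of_nonneg_left (hbound z hz0) (by positivity)
      _ = K * A * Real.exp (-(2⁻¹ : ℝ) * z ^ 2) + K * B * (z * Real.exp (-(2⁻¹ : ℝ) * z ^ 2))
            + K * C * (z ^ 2 * Real.exp (-(2⁻¹ : ℝ) * z ^ 2)) := by
          rw [hexp_eq z]; ring
  -- splitting
  have hsplit : (∫ z in Set.Ioi (0 : ℝ), K * Real.exp (-z ^ 2 / 2) * F z₁ z₂ (s * z))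
      = (∫ z in Set.Ioc (0 : ℝ) 1, K * Real.exp (-z ^ 2 / 2) * F z₁ z₂ (s * z))
        + ∫ z in Set.Ioi (1 : ℝ), K * Real.exp (-z ^ 2 / 2) * F z₁ z₂ (s * z) := by
    rw [← Set.Ioc_union_Ioi_eq_Ioi (zero_le_one : (0:ℝ) ≤ 1)]
    exact setIntegral_union (Set.Ioc_disjoint_Ioi le_rfl) measurableSet_Ioi
      (hf.mono_set Set.Ioc_subset_Ioi_self) (hf.mono_set (Set.Ioi_subset_Ioi zero_le_one))
  -- lower bound on Ioc 0 1
  have hlow1cont : Continuous fun z : ℝ => K * (Real.exp (-z ^ 2 / 2) * z) * Fs := by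
    fun_prop
  have h1 : (∫ z in Set.Ioc (0 : ℝ) 1, K * (Real.exp (-z ^ 2 / 2) * z) * Fs)
      ≤ ∫ z in Set.Ioc (0 : ℝ) 1, K * Real.exp (-z ^ 2 / 2) * F z₁ z₂ (s * z) := by
    apply setIntegral_mono_on (hlow1cont.integrableOn_Ioc)
      (hf.mono_set Set.Ioc_subset_Ioi_self) measurableSet_Ioc
    intro z hz
    have hsc := F_scale hz₁ hz₂ hz.1.le hz.2 (s := s)
    calc K * (Real.exp (-z ^ 2 / 2) * z) * Fs
        = K * Real.exp (-z ^ 2 / 2) * (z * Fs) := by ring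
      _ ≤ K * Real.exp (-z ^ 2 / 2) * F z₁ z₂ (s * z) :=
          mul_le_mul_of_nonneg_left hsc (by positivity)
  -- lower bound on Ioi 1
  have hgR : Integrable fun z : ℝ => K * Real.exp (-z ^ 2 / 2) := by
    refine (hE.const_mul K).congr (Filter.Eventually.of_forall fun z => ?_)
    show K * Real.exp (-(2⁻¹ : ℝ) * z ^ 2) = K * Real.exp (-z ^ 2 / 2)
    rw [hexp_eq z]
  have h2 : (∫ z in Set.Ioi (1 : ℝ), K * Real.exp (-z ^ 2 / 2) * Fs)
      ≤ ∫ z in Set.Ioi (1 : ℝ), K * Real.exp (-z ^ 2 / 2) * F z₁ z₂ (s * z) := by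
    apply setIntegral_mono_on ((hgR.mul_const Fs).integrableOn)
      (hf.mono_set (Set.Ioi_subset_Ioi zero_le_one)) measurableSet_Ioi
    intro z hz
    have hz1 : (1 : ℝ) ≤ z := (Set.mem_Ioi.1 hz).le
    have hm : Fs ≤ F z₁ z₂ (s * z) := by
      apply F_mono hz₁ hz₂
      have h2 : 1 ≤ z ^ 2 := by nlinarith
      nlinarith [mul_le_mul_of_nonneg_left h2 (sq_nonneg s)]
    exact mul_le_mul_of_nonneg_left hm (by positivity)
  -- compute the Ioc integral
  have hderiv : ∀ z ∈ Set.uIcc (0 : ℝ) 1,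
      HasDerivAt (fun t : ℝ => -Real.exp (-t ^ 2 / 2)) (Real.exp (-z ^ 2 / 2) * z) z := by
    intro z _
    have h1' : HasDerivAt (fun t : ℝ => -t ^ 2 / 2) (-(2 * z ^ 1) / 2) z :=
      ((hasDerivAt_pow 2 z).neg).div_const 2
    have h2' := h1'.exp.neg
    refine h2'.congr_deriv ?_
    rw [pow_one]
    ring
  have hEval : (∫ z in (0:ℝ)..1, Real.exp (-z ^ 2 / 2) * z) = 1 - Real.exp (-1 / 2) := by
    rw [intervalIntegral.integral_eq_sub_of_hasDerivAt hderiv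
      (Continuous.intervalIntegrable (by fun_prop) 0 1)]
    norm_num
    ring
  have hIoc : (∫ z in Set.Ioc (0 : ℝ) 1, K * (Real.exp (-z ^ 2 / 2) * z) * Fs)
      = K * (1 - Real.exp (-1 / 2)) * Fs := by
    rw [integral_mul_const, integral_const_mul, ← intervalIntegral.integral_of_le zero_le_one,
      hEval]
  have hIoi1 : (∫ z in Set.Ioi (1 : ℝ), K * Real.exp (-z ^ 2 / 2) * Fs)
      = (∫ z in Set.Ioi (1 : ℝ), K * Real.exp (-z ^ 2 / 2)) * Fs := by
    rw [integral_mul_const]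
  have := add_le_add (hIoc ▸ h1) (hIoi1 ▸ h2)
  rw [hsplit]
  calc (K * (1 - Real.exp (-1 / 2)) + ∫ z in Set.Ioi (1 : ℝ), K * Real.exp (-z ^ 2 / 2)) * Fs
      = K * (1 - Real.exp (-1 / 2)) * Fs
        + (∫ z in Set.Ioi (1 : ℝ), K * Real.exp (-z ^ 2 / 2)) * Fs := by ring
    _ ≤ _ := this
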